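/- Decoding recovers each component of the interleaved encoding: for any v : Fin n → ℕ and i : Fin n, the number whose j-th bit is bit (j*n + i) of encode(v) equals v i. -/

import Mathlib

/-- Interleaved encoding of `n` natural numbers into a single natural number:
bit `j` of component `i` is stored at bit position `j*n + i`. -/
def encode (n : ℕ) (v : Fin n → ℕ) : ℕ :=
  ∑ i : Fin n, ∑ j ∈ Finset.range (v i + 1),
    (Nat.testBit (v i) j).toNat * 2 ^ (j * n + (i : ℕ))

lemma sum_bits_lt {α : Type*} [DecidableEq α] (s : Finset α) (e : α → ℕ) (b : α → Bool)
    (he : Set.InjOn e s) (E : ℕ) (hE : ∀ k ∈ s, e k < E) :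
    (∑ k ∈ s, (b k).toNat * 2 ^ (e k)) < 2 ^ E := by
  calc (∑ k ∈ s, (b k).toNat * 2 ^ (e k)) ≤ ∑ k ∈ s, 2 ^ (e k) := by
        apply Finset.sum_le_sum
        intro k _
        have h1 : (b k).toNat ≤ 1 := Bool.toNat_le (b k)
        nlinarith [pow_pos (show 0 < 2 by norm_num) (e k)]
    _ = ∑ m ∈ s.image e, 2 ^ m := (Finset.sum_image (fun x hx y hy h => he hx hy h)).symm
    _ ≤ ∑ m ∈ Finset.range E, 2 ^ m := by
        apply Finset.sum_le_sum_of_subset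
        intro m hm
        simp only [Finset.mem_image] at hm
        obtain ⟨k, hk, rfl⟩ := hm
        exact Finset.mem_range.mpr (hE k hk)
    _ < 2 ^ E := by
        clear hE he
        have key : ∑ m ∈ Finset.range E, 2 ^ m = 2 ^ E - 1 := by
          induction E with
          | zero => simp
          | succ E ih =>
            rw [Finset.sum_range_succ, ih, pow_succ]
            have h := Nat.one_le_two_pow (n := E)
            omega
        have h := Nat.one_le_two_pow (n := E)
        omega

lemma testBit_sum_bits {α : Type*} [DecidableEq α] (s : Finset α) (e : α → ℕ) (b : α → Bool)
    (he : Set.InjOn e s) (p : ℕ) :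
    (∑ k ∈ s, (b k).toNat * 2 ^ (e k)).testBit p
      = decide (∃ k ∈ s, e k = p ∧ b k = true) := by
  induction s using Finset.strongInduction with
  | _ s ih =>
    rcases s.eq_empty_or_nonempty with rfl | hne
    · simp
    · obtain ⟨a, ha, hamax⟩ := s.exists_max_image e hne
      have hsub : s.erase a ⊂ s := Finset.erase_ssubset ha
      have he' : Set.InjOn e (s.erase a) :=
        he.mono (fun x hx => Finset.mem_of_mem_erase hx)
      have hrest : (∑ k ∈ s.erase a, (b k).toNat * 2 ^ (e k)) < 2 ^ (e a) := by
        apply sum_bits_lt _ _ _ he'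
        intro k hk
        have h1 := hamax k (Finset.mem_of_mem_erase hk)
        have h2 : e k ≠ e a := fun h =>
          (Finset.ne_of_mem_erase hk) (he (Finset.mem_of_mem_erase hk) ha h)
        omega
      rw [← Finset.insert_erase ha, Finset.sum_insert (Finset.notMem_erase a s),
        mul_comm, Nat.testBit_two_pow_mul_add _ hrest p]
      split_ifs with hp
      · rw [ih _ hsub he']
        congr 1
        simp only [eq_iff_iff]
        constructor
        · rintro ⟨k, hk, rfl, hb⟩
          exact ⟨k, Finset.mem_insert_of_mem hk, rfl, hb⟩
        · rintro ⟨k, hk, rfl, hb⟩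
          rcases Finset.mem_insert.mp hk with rfl | hk'
          · omega
          · exact ⟨k, hk', rfl, hb⟩
      · have hone : ∀ m, Nat.testBit 1 m = decide (m = 0) := by
          intro m
          cases m with
          | zero => simp
          | succ m => simp [Nat.testBit_succ]
        have hba : ((b a).toNat).testBit (p - e a) = (b a && decide (p - e a = 0)) := by
          cases b a <;> simp [hone]
        rw [hba, Bool.eq_iff_iff]
        simp only [Bool.and_eq_true, decide_eq_true_eq]
        constructor
        · rintro ⟨hb, hpe⟩
          exact ⟨a, Finset.mem_insert_self a _, by omega, hb⟩
        · rintro ⟨k, hk, hek, hb⟩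
          rcases Finset.mem_insert.mp hk with rfl | hk'
          · exact ⟨hb, by omega⟩
          · exfalso
            have h1 := hamax k (Finset.mem_of_mem_erase hk')
            have h2 : e k ≠ e a := fun h =>
              (Finset.ne_of_mem_erase hk') (he (Finset.mem_of_mem_erase hk') ha h)
            omega

/-- Decoding recovers each component: the number whose `j`-th bit is bit
`j*n + i` of `encode n v` equals `v i`, i.e. the bits agree at every position. -/
theorem stmt_1 (n : ℕ) (hn : 1 ≤ n) (v : Fin n → ℕ) (i : Fin n) (j : ℕ) :
    Nat.testBit (encode n v) (j * n + (i : ℕ)) = Nat.testBit (v i) j := by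
  classical
  have uniq : ∀ (i1 i2 : Fin n) (j1 j2 : ℕ),
      j1 * n + (i1 : ℕ) = j2 * n + (i2 : ℕ) → i1 = i2 ∧ j1 = j2 := by
    intro i1 i2 j1 j2 h
    have h1 : (i1 : ℕ) < n := i1.2
    have h2 : (i2 : ℕ) < n := i2.2
    have hm1 : (j1 * n + (i1 : ℕ)) % n = (i1 : ℕ) := by
      rw [add_comm, Nat.add_mul_mod_self_right, Nat.mod_eq_of_lt h1]
    have hm2 : (j2 * n + (i2 : ℕ)) % n = (i2 : ℕ) := by
      rw [add_comm, Nat.add_mul_mod_self_right, Nat.mod_eq_of_lt h2]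
    have hi : (i1 : ℕ) = (i2 : ℕ) := by rw [← hm1, ← hm2, h]
    rw [hi] at h
    have hmul : j1 * n = j2 * n := Nat.add_right_cancel h
    exact ⟨Fin.ext hi, Nat.eq_of_mul_eq_mul_right (by omega) hmul⟩
  have henc : encode n v = ∑ k ∈ (Finset.univ : Finset (Fin n)).sigma
      (fun i => Finset.range (v i + 1)),
      ((v k.1).testBit k.2).toNat * 2 ^ (k.2 * n + (k.1 : ℕ)) := by
    rw [encode, Finset.sum_sigma]
  have hinj : Set.InjOn (fun k : Σ _ : Fin n, ℕ => k.2 * n + (k.1 : ℕ))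
      ((Finset.univ : Finset (Fin n)).sigma (fun i => Finset.range (v i + 1))) := by
    rintro ⟨i1, j1⟩ _ ⟨i2, j2⟩ _ h
    obtain ⟨hi, hj⟩ := uniq i1 i2 j1 j2 h
    subst hi; subst hj; rfl
  rw [henc, testBit_sum_bits _ _ _ hinj]
  by_cases hb : (v i).testBit j
  · have hle : 2 ^ j ≤ v i := Nat.ge_two_pow_of_testBit hb
    have hjlt : j < v i + 1 := by
      have := Nat.lt_two_pow_self (n := j)
      omega
    rw [hb, decide_eq_true_eq]
    exact ⟨⟨i, j⟩, by simp [Finset.mem_sigma, hjlt], rfl, hb⟩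
  · rw [Bool.eq_false_iff.mpr hb, decide_eq_false_iff_not]
    rintro ⟨⟨i', j'⟩, _, heq, hb'⟩
    obtain ⟨hi, hj⟩ := uniq i' i j' j heq
    subst hi; subst hj
    exact hb hb'
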